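/- arXiv:1703.07419 — 3 statements merged into one kernel-verified Lean document; each statement's English description precedes it below -/
import Mathlib

section
/- Let S ⊆ ℝ^L be a nonempty, compact, convex set and let λ̄ : ℝ^L → ℝ^L satisfy the monotonicity condition on S. If B* ∈ S maximizes x ↦ ⟨x, λ̄(B*)⟩ over S and B̂ ∈ S maximizes x ↦ ⟨x, λ̄(B̂)⟩ over S, then B* = B̂; that is, the equilibrium point is unique. (Uniqueness part of the paper's proof of Lemma 2 / Lemma on the replicator equilibrium.) -/
/-- Uniqueness of the equilibrium point under the monotonicity condition
`⟨B − B̂, λ̄(B) − λ̄(B̂)⟩ < 0` for all `B ≠ B̂` in `S`. -/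
theorem equilibrium_unique
    (L : ℕ) (S : Set (Fin L → ℝ)) (hS : S.Nonempty) (hSc : IsCompact S)
    (hSconv : Convex ℝ S)
    (lam : (Fin L → ℝ) → (Fin L → ℝ))
    (hmono : ∀ B ∈ S, ∀ Bh ∈ S, B ≠ Bh →
      ∑ i, (B i - Bh i) * (lam B i - lam Bh i) < 0)
    (Bstar Bhat : Fin L → ℝ) (hBstar : Bstar ∈ S) (hBhat : Bhat ∈ S)
    (hmaxstar : ∀ x ∈ S, ∑ i, x i * lam Bstar i ≤ ∑ i, Bstar i * lam Bstar i)
    (hmaxhat : ∀ x ∈ S, ∑ i, x i * lam Bhat i ≤ ∑ i, Bhat i * lam Bhat i) :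
    Bstar = Bhat := by
  by_contra hne
  have h3 := hmono Bstar hBstar Bhat hBhat hne
  have h1 := hmaxstar Bhat hBhat
  have h2 := hmaxhat Bstar hBstar
  have expand : ∑ i, (Bstar i - Bhat i) * (lam Bstar i - lam Bhat i)
      = ((∑ i, Bstar i * lam Bstar i) - ∑ i, Bhat i * lam Bstar i)
        + ((∑ i, Bhat i * lam Bhat i) - ∑ i, Bstar i * lam Bhat i) := by
    rw [← Finset.sum_sub_distrib, ← Finset.sum_sub_distrib, ← Finset.sum_add_distrib]
    exact Finset.sum_congr rfl fun i _ => by ring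
  rw [expand] at h3
  linarith
end

section
/- Let S denote the unit simplex {x ∈ ℝ^L : x_ℓ ≥ 0 for all ℓ, Σ_ℓ x_ℓ = 1}. Let λ̄ : ℝ^L → ℝ^L be continuous on S and satisfy the monotonicity condition on S, and let B* ∈ S be the equilibrium, i.e., ⟨x, λ̄(B*)⟩ ≤ ⟨B*, λ̄(B*)⟩ for all x ∈ S. Let B : [0,∞) → ℝ^L be continuously differentiable, satisfy the replicator equation B_ℓ'(t) = B_ℓ(t)·(λ̄_ℓ(B(t)) − Σ_k λ̄_k(B(t)) B_k(t)) for all t ≥ 0 and all ℓ, and satisfy B(t) ∈ S and B_ℓ(t) > 0 for all t ≥ 0 and all ℓ. Then B(t) → B* as t → ∞. (This is the paper's Lemma 2: solutions of the replicator ODE starting in the interior of the simplex converge to the unique equilibrium point B*.) -/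
open Set Filter Real


/-- Convergence of replicator-equation trajectories started in the interior of the unit
simplex `S` to the unique equilibrium `B*`, when `λ̄` is continuous on `S` and satisfies
the monotonicity condition on `S`. -/
theorem replicator_converges_to_equilibrium
    (L : ℕ)
    (S : Set (Fin L → ℝ))
    (hSdef : S = {x : Fin L → ℝ | (∀ ℓ, 0 ≤ x ℓ) ∧ ∑ ℓ, x ℓ = 1})
    (lam : (Fin L → ℝ) → (Fin L → ℝ)) (hlam : ContinuousOn lam S)
    (hmono : ∀ B ∈ S, ∀ Bh ∈ S, B ≠ Bh →
      ∑ i, (B i - Bh i) * (lam B i - lam Bh i) < 0)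
    (Bstar : Fin L → ℝ) (hBstar : Bstar ∈ S)
    (heq : ∀ x ∈ S, ∑ i, x i * lam Bstar i ≤ ∑ i, Bstar i * lam Bstar i)
    (B : ℝ → Fin L → ℝ)
    (hode : ∀ t ∈ Set.Ici (0 : ℝ), ∀ ℓ, HasDerivWithinAt (fun s => B s ℓ)
      (B t ℓ * (lam (B t) ℓ - ∑ k, lam (B t) k * B t k)) (Set.Ici 0) t)
    (hmem : ∀ t ∈ Set.Ici (0 : ℝ), B t ∈ S)
    (hpos : ∀ t ∈ Set.Ici (0 : ℝ), ∀ ℓ, 0 < B t ℓ) :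
    Filter.Tendsto B Filter.atTop (nhds Bstar) := by
  classical
  have hScomp : IsCompact S := by
    have : S = stdSimplex ℝ (Fin L) := by rw [hSdef]; rfl
    rw [this]; exact isCompact_stdSimplex ℝ (Fin L)
  have hSsum : ∀ x ∈ S, ∑ i, x i = 1 := by
    intro x hx; rw [hSdef] at hx; exact hx.2
  have hSnn : ∀ x ∈ S, ∀ i, 0 ≤ x i := by
    intro x hx; rw [hSdef] at hx; exact hx.1
  have hSle1 : ∀ x ∈ S, ∀ i, x i ≤ 1 := by
    intro x hx i
    calc x i ≤ ∑ j, x j := Finset.single_le_sum (fun j _ => hSnn x hx j) (Finset.mem_univ i)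
    _ = 1 := hSsum x hx
  set f : (Fin L → ℝ) → ℝ := fun x => ∑ i, (x i - Bstar i) * lam x i with hf_def
  have hf_cont : ContinuousOn f S :=
    continuousOn_finset_sum _ fun i _ =>
      (((continuous_apply i).continuousOn.sub continuousOn_const)).mul
        ((continuous_apply i).comp_continuousOn hlam)
  -- f is negative away from Bstar
  have hf_neg : ∀ x ∈ S, x ≠ Bstar → f x < 0 := by
    intro x hx hne
    have h1 : ∑ i, (x i - Bstar i) * (lam x i - lam Bstar i) < 0 :=
      hmono x hx Bstar hBstar hne
    have h2 : ∑ i, (x i - Bstar i) * lam Bstar i ≤ 0 := by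
      have e : ∑ i, (x i - Bstar i) * lam Bstar i
          = ∑ i, x i * lam Bstar i - ∑ i, Bstar i * lam Bstar i := by
        rw [← Finset.sum_sub_distrib]; exact Finset.sum_congr rfl fun i _ => by ring
      rw [e]; linarith [heq x hx]
    have h3 : f x = (∑ i, (x i - Bstar i) * (lam x i - lam Bstar i))
        + ∑ i, (x i - Bstar i) * lam Bstar i := by
      rw [hf_def, ← Finset.sum_add_distrib]
      exact Finset.sum_congr rfl fun i _ => by ring
    rw [h3]; linarith
  -- Lyapunov function V
  set V : ℝ → ℝ := fun t => ∑ i, Bstar i * (Real.log (Bstar i) - Real.log (B t i))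
    with hV_def
  -- derivative of V
  have hVderiv : ∀ t ∈ Ici (0:ℝ), HasDerivWithinAt V (f (B t)) (Ici 0) t := by
    intro t ht
    have hco : ∀ i, HasDerivWithinAt (fun s => Bstar i * (Real.log (Bstar i) - Real.log (B s i)))
        (-(Bstar i * (lam (B t) i - ∑ k, lam (B t) k * B t k))) (Ici 0) t := by
      intro i
      have hBi : B t i ≠ 0 := (hpos t ht i).ne'
      have hlog : HasDerivWithinAt (fun s => Real.log (B s i))
          ((B t i * (lam (B t) i - ∑ k, lam (B t) k * B t k)) / B t i) (Ici 0) t :=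
        (hode t ht i).log hBi
      have hlog' : HasDerivWithinAt (fun s => Real.log (B s i))
          (lam (B t) i - ∑ k, lam (B t) k * B t k) (Ici 0) t := by
        convert hlog using 1
        field_simp
      have := (hlog'.const_sub (Real.log (Bstar i))).const_mul (Bstar i)
      exact this.congr_deriv (by ring)
    have hsum := HasDerivWithinAt.fun_sum (fun i (_ : i ∈ Finset.univ) => hco i)
    refine hsum.congr_deriv (Eq.symm ?_)
    have hp1 : ∑ i, Bstar i = 1 := hSsum _ hBstar
    rw [hf_def]
    have e1 : ∑ i, (B t i - Bstar i) * lam (B t) i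
        = (∑ i, lam (B t) i * B t i) - ∑ i, Bstar i * lam (B t) i := by
      rw [← Finset.sum_sub_distrib]; exact Finset.sum_congr rfl fun i _ => by ring
    have e2 : ∑ i, -(Bstar i * (lam (B t) i - ∑ k, lam (B t) k * B t k))
        = (∑ k, lam (B t) k * B t k) * (∑ i, Bstar i) - ∑ i, Bstar i * lam (B t) i := by
      rw [Finset.mul_sum, ← Finset.sum_sub_distrib]
      exact Finset.sum_congr rfl fun i _ => by ring
    simp only [e1, e2, hp1, mul_one]
  have hVcont : ContinuousOn V (Ici 0) := fun t ht => (hVderiv t ht).continuousWithinAt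
  -- V is nonnegative (Gibbs inequality)
  have hVnonneg : ∀ t ∈ Ici (0:ℝ), 0 ≤ V t := by
    intro t ht
    have key : ∀ i, Bstar i - B t i ≤ Bstar i * (Real.log (Bstar i) - Real.log (B t i)) := by
      intro i
      rcases eq_or_lt_of_le (hSnn Bstar hBstar i) with h0 | h0
      · rw [← h0]; simp; linarith [hpos t ht i]
      · have hq : 0 < B t i := hpos t ht i
        have hd : 0 < B t i / Bstar i := div_pos hq h0
        have := Real.log_le_sub_one_of_pos hd
        rw [Real.log_div hq.ne' h0.ne'] at this
        have h2 : Bstar i * (Real.log (B t i) - Real.log (Bstar i))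
            ≤ Bstar i * (B t i / Bstar i - 1) := by
          exact mul_le_mul_of_nonneg_left this h0.le
        have h3 : Bstar i * (B t i / Bstar i - 1) = B t i - Bstar i := by
          field_simp
        nlinarith
    have hsum : ∑ i, (Bstar i - B t i) ≤ V t := Finset.sum_le_sum fun i _ => key i
    have : ∑ i, (Bstar i - B t i) = 0 := by
      rw [Finset.sum_sub_distrib, hSsum _ hBstar, hSsum _ (hmem t ht)]; ring
    linarith
  -- V is antitone
  have hDA : ∀ s : ℝ, 0 < s → HasDerivAt V (f (B s)) s := by
    intro s hs
    exact (hVderiv s hs.le).hasDerivAt (Ici_mem_nhds hs)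
  have hVanti : AntitoneOn V (Ici 0) := by
    apply antitoneOn_of_deriv_nonpos (convex_Ici 0) hVcont
    · intro s hs
      rw [interior_Ici] at hs
      exact (hDA s hs).differentiableAt.differentiableWithinAt
    · intro s hs
      rw [interior_Ici] at hs
      rw [(hDA s hs).deriv]
      rcases eq_or_ne (B s) Bstar with h | h
      · rw [h]; simp [hf_def]
      · exact (hf_neg _ (hmem s (mem_Ici.2 (le_of_lt hs))) h).le
  -- bound on lam over S, hence on the velocity
  obtain ⟨M, hM⟩ := hScomp.exists_bound_of_continuousOn hlam
  have hM0 : 0 ≤ M := le_trans (norm_nonneg _) (hM Bstar hBstar)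
  have hMi : ∀ x ∈ S, ∀ i, |lam x i| ≤ M := fun x hx i =>
    le_trans (norm_le_pi_norm (lam x) i) (hM x hx)
  have hvel : ∀ t ∈ Ici (0:ℝ), ∀ i,
      |B t i * (lam (B t) i - ∑ k, lam (B t) k * B t k)| ≤ 2 * M := by
    intro t ht i
    have hx := hmem t ht
    have hc : |∑ k, lam (B t) k * B t k| ≤ M := by
      calc |∑ k, lam (B t) k * B t k| ≤ ∑ k, |lam (B t) k * B t k| :=
            Finset.abs_sum_le_sum_abs _ _
      _ ≤ ∑ k, M * B t k := by
            apply Finset.sum_le_sum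
            intro k _
            rw [abs_mul, abs_of_nonneg (hSnn _ hx k)]
            exact mul_le_mul_of_nonneg_right (hMi _ hx k) (hSnn _ hx k)
      _ = M := by rw [← Finset.mul_sum, hSsum _ hx, mul_one]
    rw [abs_mul]
    calc |B t i| * |lam (B t) i - ∑ k, lam (B t) k * B t k|
        ≤ 1 * (M + M) := by
          apply mul_le_mul
          · rw [abs_of_nonneg (hSnn _ hx i)]; exact hSle1 _ hx i
          · calc |lam (B t) i - ∑ k, lam (B t) k * B t k|
                ≤ |lam (B t) i| + |∑ k, lam (B t) k * B t k| := abs_sub _ _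
            _ ≤ M + M := add_le_add (hMi _ hx i) hc
          · exact abs_nonneg _
          · linarith
    _ = 2 * M := by ring
  -- coordinatewise Lipschitz bound on B
  have hlip : ∀ a ∈ Ici (0:ℝ), ∀ b ∈ Ici (0:ℝ), dist (B b) (B a) ≤ 2 * M * |b - a| := by
    intro a ha b hb
    rw [dist_pi_le_iff (by positivity)]
    intro i
    have := (convex_Ici (0:ℝ)).norm_image_sub_le_of_norm_hasDerivWithin_le
      (f := fun s => B s i)
      (f' := fun s => B s i * (lam (B s) i - ∑ k, lam (B s) k * B s k))
      (fun x hx => hode x hx i) (fun x hx => hvel x hx i) ha hb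
    rw [Real.dist_eq, ← Real.norm_eq_abs]
    simpa using this
  -- suppose B does not converge to Bstar
  by_contra hnot
  rw [Metric.tendsto_atTop] at hnot
  push_neg at hnot
  obtain ⟨ε, hε, hfreq⟩ := hnot
  -- the compact set K away from Bstar
  set K : Set (Fin L → ℝ) := S ∩ {x | ε/2 ≤ dist x Bstar} with hK_def
  have hKcomp : IsCompact K :=
    hScomp.inter_right (isClosed_le continuous_const (continuous_id.dist continuous_const))
  obtain ⟨t0, ht0, hdist0⟩ := hfreq 0
  have hKne : K.Nonempty := ⟨B t0, hmem t0 ht0, by simp; linarith⟩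
  obtain ⟨z, hzK, hz'⟩ := hKcomp.exists_isMaxOn hKne (hf_cont.mono Set.inter_subset_left)
  have hz : ∀ y ∈ K, f y ≤ f z := fun y hy => hz' hy
  set δ : ℝ := -f z with hδ_def
  have hδpos : 0 < δ := by
    have hzne : z ≠ Bstar := by
      intro h
      have := hzK.2
      rw [h] at this
      simp at this
      linarith
    have := hf_neg z hzK.1 hzne
    rw [hδ_def]; linarith
  -- the time step h
  set τ : ℝ := (ε/2) / (2*M + 1) with hτ_def
  have hτpos : 0 < τ := by positivity
  have hτbound : 2 * M * τ ≤ ε / 2 := by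
    rw [hτ_def]
    rw [mul_div_assoc']
    rw [div_le_iff₀ (by positivity)]
    nlinarith
  -- the decrease step
  have hdec : ∀ a, 0 ≤ a → ε ≤ dist (B a) Bstar → V (a + τ) ≤ V a - δ * τ := by
    intro a ha hda
    have hsub : Icc a (a + τ) ⊆ Ici (0:ℝ) := fun s hs => le_trans ha hs.1
    have hKmem : ∀ s ∈ Icc a (a + τ), B s ∈ K := by
      intro s hs
      refine ⟨hmem s (hsub hs), ?_⟩
      have h1 : dist (B s) (B a) ≤ 2 * M * |s - a| := hlip a ha s (hsub hs)
      have h2 : |s - a| ≤ τ := by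
        rw [abs_of_nonneg (by linarith [hs.1])]
        linarith [hs.2]
      have h3 : dist (B s) (B a) ≤ ε / 2 := by
        calc dist (B s) (B a) ≤ 2 * M * |s - a| := h1
        _ ≤ 2 * M * τ := by nlinarith
        _ ≤ ε / 2 := hτbound
      have h4 : dist (B a) Bstar ≤ dist (B a) (B s) + dist (B s) Bstar := dist_triangle _ _ _
      rw [dist_comm (B a) (B s)] at h4
      simp only [Set.mem_setOf_eq]
      linarith
    set g : ℝ → ℝ := fun t => V t + δ * t with hg_def
    have hganti : AntitoneOn g (Icc a (a + τ)) := by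
      apply antitoneOn_of_deriv_nonpos (convex_Icc a (a + τ))
      · exact (hVcont.mono hsub).add (continuous_const.mul continuous_id).continuousOn
      · intro s hs
        rw [interior_Icc] at hs
        have hs0 : 0 < s := lt_of_le_of_lt ha hs.1
        exact ((hDA s hs0).add ((hasDerivAt_id s).const_mul δ)).differentiableAt.differentiableWithinAt
      · intro s hs
        rw [interior_Icc] at hs
        have hs0 : 0 < s := lt_of_le_of_lt ha hs.1
        have hg' : HasDerivAt g (f (B s) + δ * 1) s :=
          (hDA s hs0).add ((hasDerivAt_id s).const_mul δ)
        rw [hg'.deriv]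
        have : f (B s) ≤ -δ := by
          have := hz (B s) (hKmem s ⟨hs.1.le, hs.2.le⟩)
          rw [hδ_def]; linarith
        linarith
    have := hganti (left_mem_Icc.2 (by linarith)) (right_mem_Icc.2 (by linarith)) (by linarith)
    rw [hg_def] at this
    simp only at this
    nlinarith
  -- iterate the decrease to get a contradiction
  have hiter : ∀ n : ℕ, ∃ t, 0 ≤ t ∧ V t ≤ V 0 - n * (δ * τ) := by
    intro n
    induction n with
    | zero => exact ⟨0, le_refl 0, by simp⟩
    | succ n ih =>
      obtain ⟨t, ht, hVt⟩ := ih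
      obtain ⟨a, hat, ha⟩ := hfreq t
      have ha0 : 0 ≤ a := le_trans ht hat
      have hVa : V a ≤ V t := hVanti ht ha0 hat
      have := hdec a ha0 ha
      refine ⟨a + τ, by linarith, ?_⟩
      push_cast
      nlinarith
  obtain ⟨n, hn⟩ := exists_nat_gt (V 0 / (δ * τ))
  obtain ⟨t, ht, hVt⟩ := hiter n
  have h1 : V 0 < n * (δ * τ) := by
    rw [div_lt_iff₀ (by positivity)] at hn
    linarith [hn]
  have := hVnonneg t ht
  linarith
end

section
/- Let D : ℝ^m → ℝ be concave and continuously differentiable, and suppose D attains its maximum over ℝ^m at a unique point λ*. Let λ : [0,∞) → ℝ^m be differentiable, satisfy the gradient-flow ODE λ'(t) = ∇D(λ(t)) for all t ≥ 0, and have bounded range. Then λ(t) → λ* as t → ∞. (This is the paper's lemma that the ODE λ̇ = ∇_λ D(λ) converges to λ*, the solution of the dual problem max_{λ} D(λ), and hence that the price iterations converge to the optimal link prices.) -/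
open Filter Set Topology
open scoped RealInnerProductSpace

section aux

variable {F : Type*} [NormedAddCommGroup F] [InnerProductSpace ℝ F] [CompleteSpace F]

lemma grad_fderiv (D : F → ℝ) (hd : Differentiable ℝ D) (x : F) :
    HasFDerivAt D (InnerProductSpace.toDual ℝ F (gradient D x)) x :=
  hasGradientAt_iff_hasFDerivAt.mp (hd x).hasGradientAt

lemma concave_grad_ineq (D : F → ℝ) (hconc : ConcaveOn ℝ Set.univ D)
    (hd : Differentiable ℝ D) (x y : F) :
    D y ≤ D x + ⟪gradient D x, y - x⟫ := by
  set φ : ℝ → ℝ := fun s => D (x + s • (y - x)) with hφ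
  have hc : ConcaveOn ℝ Set.univ φ := by
    have h2 := hconc.comp_affineMap (AffineMap.lineMap x y : ℝ →ᵃ[ℝ] F)
    simp only [Set.preimage_univ] at h2
    have he : φ = D ∘ (AffineMap.lineMap x y : ℝ →ᵃ[ℝ] F) := by
      funext s
      simp [φ, AffineMap.lineMap_apply, add_comm]
    rw [he]; exact h2
  have hder : HasDerivAt φ ⟪gradient D x, y - x⟫ 0 := by
    have hcur : HasDerivAt (fun s : ℝ => x + s • (y - x)) (y - x) 0 := by
      simpa using ((hasDerivAt_id (0:ℝ)).smul_const (y - x)).const_add x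
    have := (grad_fderiv D hd (x + (0:ℝ) • (y - x))).comp_hasDerivAt 0 hcur
    simpa [InnerProductSpace.toDual_apply_apply, φ, Function.comp_def] using this
  have hs := hc.slope_le_of_hasDerivAt (Set.mem_univ (0:ℝ)) (Set.mem_univ (1:ℝ))
    zero_lt_one hder
  have : slope φ 0 1 = D y - D x := by
    simp [slope, φ]
  rw [this] at hs
  linarith

lemma grad_zero_max (D : F → ℝ) (hconc : ConcaveOn ℝ Set.univ D)
    (hd : Differentiable ℝ D) (p : F) (hp : gradient D p = 0) (x : F) : D x ≤ D p := by
  have := concave_grad_ineq D hconc hd p x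
  simpa [hp] using this

end aux

/-- Convergence of the gradient flow for a concave, continuously differentiable dual
function `D` with a unique maximizer `λ*`: any bounded trajectory of
`λ'(t) = ∇D(λ(t))` converges to `λ*`. -/
theorem gradient_flow_converges_to_unique_maximizer
    (m : ℕ) (D : EuclideanSpace ℝ (Fin m) → ℝ)
    (hconc : ConcaveOn ℝ Set.univ D) (hD : ContDiff ℝ 1 D)
    (lstar : EuclideanSpace ℝ (Fin m))
    (hmax : ∀ x, D x ≤ D lstar)
    (huniq : ∀ y, (∀ x, D x ≤ D y) → y = lstar)
    (l : ℝ → EuclideanSpace ℝ (Fin m))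
    (hode : ∀ t ∈ Set.Ici (0 : ℝ), HasDerivAt l (gradient D (l t)) t)
    (hbdd : Bornology.IsBounded (Set.range l)) :
    Tendsto l atTop (nhds lstar) := by
  have hd : Differentiable ℝ D := hD.differentiable one_ne_zero
  have hgc : Continuous (gradient D) := by
    have h1 : Continuous (fderiv ℝ D) := hD.continuous_fderiv one_ne_zero
    exact ((InnerProductSpace.toDual ℝ _).symm.continuous).comp h1
  -- derivative of D ∘ l
  have hgode : ∀ t ∈ Set.Ici (0:ℝ), HasDerivAt (fun s => D (l s)) (‖gradient D (l t)‖^2) t := by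
    intro t ht
    have h1 := (grad_fderiv D hd (l t)).comp_hasDerivAt t (hode t ht)
    have h2 : (InnerProductSpace.toDual ℝ _ (gradient D (l t))) (gradient D (l t))
        = ‖gradient D (l t)‖^2 := by
      rw [InnerProductSpace.toDual_apply_apply, real_inner_self_eq_norm_sq]
    rw [h2] at h1
    exact h1
  -- key inner product inequality
  have hkey : ∀ x, ⟪gradient D x, x - lstar⟫ ≤ 0 := by
    intro x
    have h1 := concave_grad_ineq D hconc hd x lstar
    have h2 := hmax x
    have h3 : ⟪gradient D x, x - lstar⟫ = -⟪gradient D x, lstar - x⟫ := by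
      rw [← neg_sub lstar x, inner_neg_right]
    linarith
  -- the squared distance, as inner product
  set g : ℝ → ℝ := fun t => ⟪l t - lstar, l t - lstar⟫ with hgdef
  have hgder : ∀ t ∈ Set.Ici (0:ℝ), HasDerivAt g
      (⟪l t - lstar, gradient D (l t)⟫ + ⟪gradient D (l t), l t - lstar⟫) t := by
    intro t ht
    have h1 : HasDerivAt (fun s => l s - lstar) (gradient D (l t)) t :=
      (hode t ht).sub_const lstar
    exact h1.inner ℝ h1
  have hganti : AntitoneOn g (Set.Ici 0) := by
    apply antitoneOn_of_deriv_nonpos (convex_Ici 0)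
    · intro s hs
      exact ((hgder s hs).continuousAt).continuousWithinAt
    · intro s hs
      rw [interior_Ici] at hs
      exact (hgder s (Set.mem_Ici.mpr (le_of_lt hs))).differentiableAt.differentiableWithinAt
    · intro s hs
      rw [interior_Ici] at hs
      rw [(hgder s (Set.mem_Ici.mpr (le_of_lt hs))).deriv]
      have hc := real_inner_comm (l s - lstar) (gradient D (l s))
      have := hkey (l s)
      linarith
  -- the gradient gets small infinitely often
  have claim : ∀ ε > (0:ℝ), ∀ T ≥ (0:ℝ), ∃ t ≥ T, ‖gradient D (l t)‖ < ε := by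
    intro ε hε T hT
    by_contra hcon
    push_neg at hcon
    set ψ : ℝ → ℝ := fun t => D (l t) - ε^2 * t with hψdef
    have hψd : ∀ t ∈ Set.Ici T, HasDerivAt ψ (‖gradient D (l t)‖^2 - ε^2) t := by
      intro t ht
      have h1 : HasDerivAt (fun t : ℝ => ε^2 * t) (ε^2) t := by
        simpa using (hasDerivAt_id t).const_mul (ε^2)
      exact (hgode t (le_trans hT ht)).sub h1
    have hmono : MonotoneOn ψ (Set.Ici T) := by
      apply monotoneOn_of_deriv_nonneg (convex_Ici T)
      · intro s hs
        exact ((hψd s hs).continuousAt).continuousWithinAt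
      · intro s hs
        rw [interior_Ici] at hs
        exact (hψd s (Set.mem_Ici.mpr (le_of_lt hs))).differentiableAt.differentiableWithinAt
      · intro s hs
        rw [interior_Ici] at hs
        rw [(hψd s (Set.mem_Ici.mpr (le_of_lt hs))).deriv]
        have h2 := hcon s (le_of_lt hs)
        nlinarith [norm_nonneg (gradient D (l s))]
    have hnum : 0 ≤ D lstar - ψ T := by
      have := hmax (l T)
      have hT2 : 0 ≤ ε^2 * T := by positivity
      simp only [hψdef]
      linarith
    set t1 : ℝ := T + (D lstar - ψ T)/ε^2 + 1 with ht1def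
    have hε2 : 0 < ε^2 := by positivity
    have hdiv : 0 ≤ (D lstar - ψ T)/ε^2 := by positivity
    have ht1 : T ≤ t1 := by rw [ht1def]; linarith
    have hψle := hmono (Set.self_mem_Ici) (Set.mem_Ici.mpr ht1) ht1
    have hψt1 : ψ t1 = D (l t1) - ε^2 * t1 := rfl
    have hDle := hmax (l t1)
    have hexp : ε^2 * t1 = ε^2 * T + (D lstar - ψ T) + ε^2 := by
      have hne : (ε:ℝ)^2 ≠ 0 := by positivity
      rw [ht1def]; field_simp
    have hT2 : 0 ≤ ε^2 * T := by positivity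
    nlinarith
  -- a sequence of times along which the gradient vanishes
  have hseq : ∀ n : ℕ, ∃ s ≥ (n:ℝ), ‖gradient D (l s)‖ < 1/(n+1) := by
    intro n
    exact claim (1/(n+1)) (by positivity) n (Nat.cast_nonneg n)
  choose t ht1 ht2 using hseq
  -- compactness: a convergent subsequence
  have hcomp : IsCompact (closure (Set.range l)) := hbdd.isCompact_closure
  obtain ⟨p, hpmem, φ, hφmono, hφlim⟩ :=
    hcomp.tendsto_subseq (fun n => subset_closure (Set.mem_range_self (t n)))
  -- the limit point is a critical point, hence the maximizer
  have h0 : gradient D p = 0 := by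
    have ha : Tendsto (fun k => gradient D (l (t (φ k)))) atTop (𝓝 (gradient D p)) :=
      (hgc.tendsto p).comp hφlim
    have hb : Tendsto (fun k => gradient D (l (t (φ k)))) atTop (𝓝 0) := by
      rw [tendsto_zero_iff_norm_tendsto_zero]
      apply squeeze_zero (fun k => norm_nonneg _) (g := fun k : ℕ => 1/((k:ℝ)+1))
      · intro k
        have h1 : ‖gradient D (l (t (φ k)))‖ < 1/((φ k : ℝ)+1) := ht2 (φ k)
        have h2 : (1:ℝ)/((φ k : ℝ)+1) ≤ 1/((k:ℝ)+1) := by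
          apply one_div_le_one_div_of_le (by positivity)
          have h3 : ((k:ℝ)) ≤ (φ k : ℝ) := by exact_mod_cast hφmono.le_apply
          linarith
        linarith
      · exact tendsto_one_div_add_atTop_nhds_zero_nat
    exact tendsto_nhds_unique ha hb
  have hp : p = lstar := huniq p (grad_zero_max D hconc hd p h0)
  rw [hp] at hφlim
  -- conclude using antitonicity of the squared distance
  rw [Metric.tendsto_atTop]
  intro ε hε
  obtain ⟨K, hK⟩ := (Metric.tendsto_atTop.mp hφlim) ε hε
  have hk : dist (l (t (φ K))) lstar < ε := hK K le_rfl
  refine ⟨t (φ K), fun s hs => ?_⟩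
  have h0k : (0:ℝ) ≤ t (φ K) := le_trans (Nat.cast_nonneg _) (ht1 (φ K))
  have hmono := hganti (Set.mem_Ici.mpr h0k) (Set.mem_Ici.mpr (le_trans h0k hs)) hs
  have hgeq : ∀ u : ℝ, g u = dist (l u) lstar ^ 2 := by
    intro u
    simp only [hgdef]
    rw [real_inner_self_eq_norm_sq, dist_eq_norm]
  rw [hgeq, hgeq] at hmono
  have hsq : dist (l s) lstar ^ 2 ≤ dist (l (t (φ K))) lstar ^ 2 := hmono
  nlinarith [dist_nonneg (x := l s) (y := lstar), dist_nonneg (x := l (t (φ K))) (y := lstar)]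
end
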